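/- The dissociation (shuffle) identity: for positive reals x_1,...,x_n and y_1,...,y_m, the sum of p_{n+m}(z_1,...,z_{n+m}) over all shuffles (interleavings z preserving the relative order of the x's and of the y's) equals p_n(x_1,...,x_n)·p_m(y_1,...,y_m). -/

import Mathlib

/-- Ranking probability of a list: `pL [x_1,…,x_n] = ∏_k x_k/(x_k + ⋯ + x_n)`. -/
noncomputable def pL : List ℝ → ℝ
  | [] => 1
  | x :: xs => x / (x + xs.sum) * pL xs

/-- The list of all shuffles (order-preserving interleavings) of two lists. -/
def shuffles : List ℝ → List ℝ → List (List ℝ)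
  | [], ys => [ys]
  | x :: xs, [] => [x :: xs]
  | x :: xs, y :: ys =>
      (shuffles xs (y :: ys)).map (x :: ·) ++ (shuffles (x :: xs) ys).map (y :: ·)
  termination_by xs ys => xs.length + ys.length

lemma shuffles_sum (xs ys : List ℝ) : ∀ z ∈ shuffles xs ys, z.sum = xs.sum + ys.sum := by
  induction xs, ys using shuffles.induct with
  | case1 ys => simp [shuffles]
  | case2 x xs => simp [shuffles]
  | case3 x xs y ys ih1 ih2 =>
    intro z hz
    rw [shuffles] at hz
    rcases List.mem_append.1 hz with h | h <;> obtain ⟨w, hw, rfl⟩ := List.mem_map.1 h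
    · have := ih1 w hw; simp [this]; ring
    · have := ih2 w hw; simp [this]; ring

theorem dissociation_shuffle (xs ys : List ℝ)
    (hx : ∀ x ∈ xs, 0 < x) (hy : ∀ y ∈ ys, 0 < y) :
    ((shuffles xs ys).map pL).sum = pL xs * pL ys := by
  induction xs, ys using shuffles.induct with
  | case1 ys => simp [shuffles, pL]
  | case2 x xs => simp [shuffles, pL]
  | case3 x xs y ys ih1 ih2 =>
    have hx' : ∀ a ∈ xs, 0 < a := fun a ha => hx a (List.mem_cons_of_mem _ ha)
    have hy' : ∀ a ∈ ys, 0 < a := fun a ha => hy a (List.mem_cons_of_mem _ ha)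
    have hxpos : 0 < x := hx x List.mem_cons_self
    have hypos : 0 < y := hy y List.mem_cons_self
    have hxs : (0:ℝ) ≤ xs.sum := List.sum_nonneg fun a ha => (hx' a ha).le
    have hys : (0:ℝ) ≤ ys.sum := List.sum_nonneg fun a ha => (hy' a ha).le
    have hS : (0:ℝ) < x + xs.sum := by linarith
    have hT : (0:ℝ) < y + ys.sum := by linarith
    have e1 : ((shuffles xs (y :: ys)).map pL).map (fun t => t) =
        (shuffles xs (y :: ys)).map pL := by simp
    have key1 : (((shuffles xs (y :: ys)).map (x :: ·)).map pL).sum =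
        x / (x + (xs.sum + (y + ys.sum))) * ((shuffles xs (y :: ys)).map pL).sum := by
      rw [List.map_map, ← List.sum_map_mul_left]
      apply congrArg
      apply List.map_congr_left
      intro w hw
      have hsum := shuffles_sum xs (y :: ys) w hw
      simp only [Function.comp, pL, hsum]
      simp
    have key2 : (((shuffles (x :: xs) ys).map (y :: ·)).map pL).sum =
        y / (y + (x + xs.sum + ys.sum)) * ((shuffles (x :: xs) ys).map pL).sum := by
      rw [List.map_map, ← List.sum_map_mul_left]
      apply congrArg
      apply List.map_congr_left
      intro w hw
      have hsum := shuffles_sum (x :: xs) ys w hw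
      simp only [Function.comp, pL, hsum]
      simp
    rw [shuffles, List.map_append, List.sum_append, key1, key2,
      ih1 hx' hy, ih2 hx hy']
    simp only [pL]
    field_simp
    ring
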